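/- Let m_1, …, m_N be nonzero vectors in ℝ^n whose generated convex cone σ is salient, i.e. σ ∩ (−σ) = {0}. If (t^{(k)})_{k∈ℕ} is a sequence of vectors in ℝ^N with all coordinates nonnegative such that Σ_{i=1}^N t_i^{(k)} m_i → 0 in ℝ^n as k → ∞, then t^{(k)} → 0 in ℝ^N, i.e. t_i^{(k)} → 0 for every i. -/

import Mathlib

theorem aux_coeffs_zero (n N : ℕ)
    (m : Fin N → EuclideanSpace ℝ (Fin n)) (hm : ∀ i, m i ≠ 0)
    (hsal : {y : EuclideanSpace ℝ (Fin n) |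
        ∃ t : Fin N → ℝ, (∀ i, 0 ≤ t i) ∧ y = ∑ i, t i • m i} ∩
      (-{y : EuclideanSpace ℝ (Fin n) |
        ∃ t : Fin N → ℝ, (∀ i, 0 ≤ t i) ∧ y = ∑ i, t i • m i}) = {0})
    (u : Fin N → ℝ) (hu : ∀ i, 0 ≤ u i) (hsum : ∑ i, u i • m i = 0) :
    ∀ i, u i = 0 := by
  intro j
  have split : ∑ i, u i • m i
      = (∑ i, (if i = j then 0 else u i) • m i) + u j • m j := by
    have h1 : ∀ i ∈ Finset.univ, u i • m i
        = (if i = j then 0 else u i) • m i + (if i = j then u j • m j else 0) := by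
      intro i _
      by_cases h : i = j
      · subst h; simp
      · simp [h]
    rw [Finset.sum_congr rfl h1, Finset.sum_add_distrib, Finset.sum_ite_eq']
    simp
  have hmem : (u j • m j : EuclideanSpace ℝ (Fin n)) ∈ ({0} : Set (EuclideanSpace ℝ (Fin n))) := by
    rw [← hsal]
    constructor
    · refine ⟨fun i => if i = j then u j else 0, fun i => by by_cases h : i = j <;> simp [h, hu j], ?_⟩
      have h2 : ∀ i ∈ Finset.univ, (if i = j then u j else 0) • m i
          = (if i = j then u j • m j else 0) := by
        intro i _
        by_cases h : i = j
        · subst h; simp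
        · simp [h]
      rw [Finset.sum_congr rfl h2, Finset.sum_ite_eq']
      simp
    · rw [Set.mem_neg]
      refine ⟨fun i => if i = j then 0 else u i, fun i => by
        by_cases h : i = j <;> simp [h, hu i], ?_⟩
      rw [hsum] at split
      have : (∑ i, (if i = j then 0 else u i) • m i) = -(u j • m j) :=
        neg_eq_of_add_eq_zero_left split.symm ▸ rfl
      · rw [← neg_eq_of_add_eq_zero_left split.symm]
  have : u j • m j = 0 := by simpa using hmem
  rcases smul_eq_zero.mp this with h | h
  · exact h
  · exact absurd h (hm j)

theorem coefficients_tendsto_zero_of_salient (n N : ℕ)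
    (m : Fin N → EuclideanSpace ℝ (Fin n)) (hm : ∀ i, m i ≠ 0)
    (hsal : {y : EuclideanSpace ℝ (Fin n) |
        ∃ t : Fin N → ℝ, (∀ i, 0 ≤ t i) ∧ y = ∑ i, t i • m i} ∩
      (-{y : EuclideanSpace ℝ (Fin n) |
        ∃ t : Fin N → ℝ, (∀ i, 0 ≤ t i) ∧ y = ∑ i, t i • m i}) = {0})
    (t : ℕ → Fin N → ℝ) (ht : ∀ k i, 0 ≤ t k i)
    (hconv : Filter.Tendsto (fun k => ∑ i, t k i • m i) Filter.atTop (nhds 0)) :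
    ∀ i, Filter.Tendsto (fun k => t k i) Filter.atTop (nhds 0) := by
  intro j
  -- the simplex
  set S : Set (Fin N → ℝ) := {u | (∀ i, 0 ≤ u i) ∧ ∑ i, u i = 1} with hS
  have hSclosed : IsClosed S := by
    have : S = (⋂ i, {u : Fin N → ℝ | 0 ≤ u i}) ∩ {u | ∑ i, u i = 1} := by
      ext u; simp [hS, Set.mem_iInter]
    rw [this]
    exact IsClosed.inter
      (isClosed_iInter fun i => isClosed_le continuous_const (continuous_apply i))
      (isClosed_eq (continuous_finset_sum _ fun i _ => continuous_apply i) continuous_const)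
  have hSsub : S ⊆ Set.Icc 0 1 := by
    rintro u ⟨hu0, hu1⟩
    refine ⟨fun i => hu0 i, fun i => ?_⟩
    calc u i ≤ ∑ i', u i' := Finset.single_le_sum (fun i' _ => hu0 i') (Finset.mem_univ i)
    _ = 1 := hu1
  have hScompact : IsCompact S := (isCompact_Icc).of_isClosed_subset hSclosed hSsub
  have hSne : S.Nonempty := by
    refine ⟨fun i => if i = j then 1 else 0, fun i => by positivity, ?_⟩
    simp
  have hgcont : Continuous (fun u : Fin N → ℝ => ‖∑ i, u i • m i‖) :=
    (continuous_finset_sum _ fun i _ => (continuous_apply i).smul continuous_const).norm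
  obtain ⟨u0, hu0S, hu0min⟩ := hScompact.exists_isMinOn hSne hgcont.continuousOn
  set c : ℝ := ‖∑ i, u0 i • m i‖ with hc
  have hcpos : 0 < c := by
    rcases (norm_nonneg (∑ i, u0 i • m i)).lt_or_eq with h | h
    · exact h
    · exfalso
      have hz : ∑ i, u0 i • m i = 0 := by
        have h' : ‖∑ i, u0 i • m i‖ = 0 := h.symm
        exact norm_eq_zero.mp h'
      have := aux_coeffs_zero n N m hm hsal u0 hu0S.1 hz
      have : (1 : ℝ) = 0 := by
        rw [← hu0S.2]
        exact Finset.sum_eq_zero fun i _ => this i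
      norm_num at this
  -- key inequality
  have key : ∀ u : Fin N → ℝ, (∀ i, 0 ≤ u i) → c * ∑ i, u i ≤ ‖∑ i, u i • m i‖ := by
    intro u hu
    set s : ℝ := ∑ i, u i with hs
    rcases eq_or_lt_of_le (Finset.sum_nonneg fun i _ => hu i : (0:ℝ) ≤ s) with h | h
    · have hall : ∀ i, u i = 0 := by
        intro i
        exact le_antisymm (h ▸ Finset.single_le_sum (fun i' _ => hu i') (Finset.mem_univ i)) (hu i)
      have h0 : ∑ i, u i • m i = 0 := Finset.sum_eq_zero fun i _ => by rw [hall i, zero_smul]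
      have hs0 : s = 0 := h.symm
      rw [h0, hs0]
      simp
    · have hmemS : (fun i => u i / s) ∈ S := by
        refine ⟨fun i => div_nonneg (hu i) h.le, ?_⟩
        rw [← Finset.sum_div, ← hs, div_self h.ne']
      have hle : c ≤ ‖∑ i, (u i / s) • m i‖ := hu0min hmemS
      have heq : ∑ i, (u i / s) • m i = s⁻¹ • ∑ i, u i • m i := by
        rw [Finset.smul_sum]
        exact Finset.sum_congr rfl fun i _ => by rw [smul_smul, div_eq_inv_mul]
      rw [heq, norm_smul, norm_inv, Real.norm_of_nonneg h.le] at hle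
      calc c * s ≤ (s⁻¹ * ‖∑ i, u i • m i‖) * s := by
            exact mul_le_mul_of_nonneg_right hle h.le
        _ = ‖∑ i, u i • m i‖ := by
          rw [mul_comm, ← mul_assoc, mul_inv_cancel₀ (ne_of_gt h : s ≠ 0), one_mul]
  -- squeeze
  have hnorm : Filter.Tendsto (fun k => c⁻¹ * ‖∑ i, t k i • m i‖) Filter.atTop (nhds 0) := by
    have := hconv.norm
    simp only [norm_zero] at this
    simpa using this.const_mul c⁻¹
  refine squeeze_zero (fun k => ht k j) (fun k => ?_) hnorm
  have h1 : t k j ≤ ∑ i, t k i :=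
    Finset.single_le_sum (fun i _ => ht k i) (Finset.mem_univ j)
  have h2 := key (t k) (ht k)
  calc t k j ≤ ∑ i, t k i := h1
    _ = c⁻¹ * (c * ∑ i, t k i) := by field_simp
    _ ≤ c⁻¹ * ‖∑ i, t k i • m i‖ :=
        mul_le_mul_of_nonneg_left h2 (inv_nonneg.mpr hcpos.le)
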